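/- Let A = k[x,y,z], let X be a zero-dimensional subscheme of ℙ² of length n with graded ideal I_X, and let J ⊂ I_X be a graded ideal such that the Hilbert series of I_X/J is t^u + t^{u+1} + ... + t^v with 0 < u ≤ v. If all minimal generators of I_X have degree ≤ u or ≥ v+2, then F = I_X/J is generated in degree u; i.e., F is a shifted truncated point module of length v+1−u. -/

import Mathlib

open MvPolynomial

attribute [local instance] MvPolynomial.gradedAlgebra

theorem homSub_fd (k : Type*) [Field k] (n : ℕ) :
    FiniteDimensional k (homogeneousSubmodule (Fin 3) k n) := by
  rw [homogeneousSubmodule_eq_finsupp_supported, AddMonoidAlgebra.supported_eq_span_single]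
  apply FiniteDimensional.span_of_finite
  apply Set.Finite.image
  apply Set.Finite.subset (Set.finite_Iic (Finsupp.equivFunOnFinite.symm fun _ => n))
  intro d hd
  simp only [Set.mem_setOf_eq] at hd
  intro i
  simpa [hd] using Finsupp.le_degree i d

/-- Let `A = k[x,y,z]`, `I` the graded ideal of a zero-dimensional subscheme, and
`J ⊆ I` a graded ideal such that `I/J` has Hilbert series `t^u + ⋯ + t^v` (`0 < u ≤ v`).
If all minimal generators of `I` have degree `≤ u` or `≥ v+2`, then `F = I/J` is
generated in degree `u`, i.e. `I ⊆ J + A·I_u`. -/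
theorem quotient_generated_in_degree_u
    (k : Type*) [Field k] (u v : ℕ) (hu : 0 < u) (huv : u ≤ v)
    (I J : Ideal (MvPolynomial (Fin 3) k))
    (hIhom : Ideal.IsHomogeneous (homogeneousSubmodule (Fin 3) k) I)
    (hJhom : Ideal.IsHomogeneous (homogeneousSubmodule (Fin 3) k) J)
    (hJI : J ≤ I)
    -- the Hilbert series of `I/J` is `t^u + t^{u+1} + ⋯ + t^v`
    (hhilb : ∀ m : ℕ,
      Module.finrank k ↥(homogeneousSubmodule (Fin 3) k m ⊓ Submodule.restrictScalars k I) =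
      Module.finrank k ↥(homogeneousSubmodule (Fin 3) k m ⊓ Submodule.restrictScalars k J) +
        (if u ≤ m ∧ m ≤ v then 1 else 0))
    -- `I` is generated by homogeneous elements of degrees `≤ u` or `≥ v+2`
    (hgen : ∃ S : Set (MvPolynomial (Fin 3) k), Ideal.span S = I ∧
      ∀ f ∈ S, ∃ d : ℕ, f.IsHomogeneous d ∧ (d ≤ u ∨ v + 2 ≤ d)) :
    I ≤ J ⊔ Ideal.span {x | x ∈ I ∧ x ∈ homogeneousSubmodule (Fin 3) k u} := by
  obtain ⟨S, hSpan, hS⟩ := hgen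
  have key : ∀ m : ℕ, ¬ (u ≤ m ∧ m ≤ v) →
      homogeneousSubmodule (Fin 3) k m ⊓ Submodule.restrictScalars k I
        = homogeneousSubmodule (Fin 3) k m ⊓ Submodule.restrictScalars k J := by
    intro m hm
    haveI := homSub_fd k m
    haveI : FiniteDimensional k
        ↥(homogeneousSubmodule (Fin 3) k m ⊓ Submodule.restrictScalars k I) :=
      Submodule.finiteDimensional_inf_left _ _
    have hle : homogeneousSubmodule (Fin 3) k m ⊓ Submodule.restrictScalars k J
        ≤ homogeneousSubmodule (Fin 3) k m ⊓ Submodule.restrictScalars k I :=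
      inf_le_inf_left _ (fun x hx => hJI hx)
    have hr : Module.finrank k
        ↥(homogeneousSubmodule (Fin 3) k m ⊓ Submodule.restrictScalars k I)
        ≤ Module.finrank k
        ↥(homogeneousSubmodule (Fin 3) k m ⊓ Submodule.restrictScalars k J) := by
      rw [hhilb m, if_neg hm]; omega
    exact (Submodule.eq_of_le_of_finrank_le hle hr).symm
  rw [← hSpan]
  apply Ideal.span_le.mpr
  intro f hf
  obtain ⟨d, hfd, hd⟩ := hS f hf
  have hfI : f ∈ I := hSpan ▸ Ideal.subset_span hf
  have hfhom : f ∈ homogeneousSubmodule (Fin 3) k d := (mem_homogeneousSubmodule d f).mpr hfd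
  by_cases hdu : d = u
  · subst hdu
    exact Ideal.mem_sup_right (Ideal.subset_span ⟨hSpan ▸ hfI, hfhom⟩)
  · have hm : ¬ (u ≤ d ∧ d ≤ v) := by
      rcases hd with h | h <;> omega
    have hmem : f ∈ homogeneousSubmodule (Fin 3) k d ⊓ Submodule.restrictScalars k I :=
      ⟨hfhom, hfI⟩
    rw [key d hm] at hmem
    exact Ideal.mem_sup_left hmem.2
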